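/- Let a : ℝ → ℝ be continuous and b : ℝ → ℝ be continuously differentiable with b(x) ≠ 0 for all x. Define c(x) = (2/9)·b(x)·∫₀ˣ b(ξ)·exp(∫ₓ^ξ a(y) dy) dξ. Then c is differentiable and satisfies c'(x) + (a(x) − b'(x)/b(x))·c(x) = (2/9)·b(x)² for all x ∈ ℝ. -/

import Mathlib

/-- Partial derivative of the Lagrangian `L x v t` in the velocity argument. -/
noncomputable def pv (L : ℝ → ℝ → ℝ → ℝ) (x v t : ℝ) : ℝ := deriv (fun w => L x w t) v

/-- Partial derivative of the Lagrangian `L x v t` in the position argument. -/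
noncomputable def px (L : ℝ → ℝ → ℝ → ℝ) (x v t : ℝ) : ℝ := deriv (fun y => L y v t) x

/-- A curve `x` satisfies the Euler–Lagrange equation of `L`:
`(d/dt)[(∂L/∂v)(x t, x' t, t)] = (∂L/∂x)(x t, x' t, t)` for all `t`. -/
def SatisfiesEL (L : ℝ → ℝ → ℝ → ℝ) (x : ℝ → ℝ) : Prop :=
  ∀ t : ℝ, deriv (fun s => pv L (x s) (deriv x s) s) t = px L (x t) (deriv x t) t

/-- Partial derivative of `f (x, t)` in the first argument. -/
noncomputable def pd1 (f : ℝ × ℝ → ℝ) (x t : ℝ) : ℝ := deriv (fun y => f (y, t)) x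

/-- Partial derivative of `f (x, t)` in the second argument. -/
noncomputable def pd2 (f : ℝ × ℝ → ℝ) (x t : ℝ) : ℝ := deriv (fun s => f (x, s)) t

theorem quadrature_solution_of_reciprocal_constraint
    (a b : ℝ → ℝ) (ha : Continuous a) (hb : ContDiff ℝ 1 b) (hbne : ∀ x : ℝ, b x ≠ 0)
    (c : ℝ → ℝ)
    (hc : ∀ x : ℝ, c x = (2/9) * b x * ∫ ξ in (0:ℝ)..x, b ξ * Real.exp (∫ y in x..ξ, a y)) :
    Differentiable ℝ c ∧
      ∀ x : ℝ, deriv c x + (a x - deriv b x / b x) * c x = (2/9) * (b x) ^ 2 := by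
  set A : ℝ → ℝ := fun x => ∫ y in (0:ℝ)..x, a y with hA
  have hAx : ∀ x : ℝ, HasDerivAt A (a x) x := by
    intro x
    exact intervalIntegral.integral_hasDerivAt_right (ha.intervalIntegrable 0 x)
      (ha.stronglyMeasurableAtFilter _ _) ha.continuousAt
  have hAcont : Continuous A := by
    have := fun x => (hAx x).differentiableAt
    exact (Differentiable.continuous (fun x => this x))
  set F : ℝ → ℝ := fun x => ∫ ξ in (0:ℝ)..x, b ξ * Real.exp (A ξ) with hF
  have hgcont : Continuous (fun ξ => b ξ * Real.exp (A ξ)) :=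
    hb.continuous.mul (Real.continuous_exp.comp hAcont)
  have hFx : ∀ x : ℝ, HasDerivAt F (b x * Real.exp (A x)) x := by
    intro x
    exact intervalIntegral.integral_hasDerivAt_right (hgcont.intervalIntegrable 0 x)
      (hgcont.stronglyMeasurableAtFilter _ _) hgcont.continuousAt
  have hceq : c = fun x => (2/9) * (b x * (Real.exp (-(A x)) * F x)) := by
    funext x
    rw [hc x]
    have h1 : ∀ ξ : ℝ, (∫ y in x..ξ, a y) = A ξ - A x := by
      intro ξ
      rw [hA]
      exact (intervalIntegral.integral_interval_sub_left (ha.intervalIntegrable 0 ξ)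
        (ha.intervalIntegrable 0 x)).symm
    have h2 : (∫ ξ in (0:ℝ)..x, b ξ * Real.exp (∫ y in x..ξ, a y))
        = (∫ ξ in (0:ℝ)..x, b ξ * Real.exp (A ξ)) * Real.exp (-(A x)) := by
      rw [← intervalIntegral.integral_mul_const]
      congr 1; funext ξ
      rw [h1 ξ, sub_eq_add_neg, Real.exp_add]; ring
    rw [h2]; ring
  have hder : ∀ x : ℝ, HasDerivAt c
      ((2/9) * (deriv b x * (Real.exp (-(A x)) * F x)
        + b x * ((Real.exp (-(A x)) * (-(a x))) * F x
          + Real.exp (-(A x)) * (b x * Real.exp (A x))))) x := by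
    intro x
    rw [hceq]
    have hbd : HasDerivAt b (deriv b x) x :=
      ((hb.differentiable one_ne_zero) x).hasDerivAt
    have hE : HasDerivAt (fun x => Real.exp (-(A x))) (Real.exp (-(A x)) * (-(a x))) x :=
      ((hAx x).neg).exp
    exact ((hbd.mul (hE.mul (hFx x))).const_mul (2/9))
  constructor
  · exact fun x => (hder x).differentiableAt
  · intro x
    rw [(hder x).deriv, hc x]
    have h2 : (∫ ξ in (0:ℝ)..x, b ξ * Real.exp (∫ y in x..ξ, a y))
        = F x * Real.exp (-(A x)) := by
      have h1 : ∀ ξ : ℝ, (∫ y in x..ξ, a y) = A ξ - A x := by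
        intro ξ
        rw [hA]
        exact (intervalIntegral.integral_interval_sub_left (ha.intervalIntegrable 0 ξ)
          (ha.intervalIntegrable 0 x)).symm
      rw [hF, ← intervalIntegral.integral_mul_const]
      congr 1; funext ξ
      rw [h1 ξ, sub_eq_add_neg, Real.exp_add]; ring
    rw [h2]
    have hexp : Real.exp (-(A x)) * Real.exp (A x) = 1 := by
      rw [← Real.exp_add]; simp
    have hbx := hbne x
    field_simp
    linear_combination (b x)^2 * hexp
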